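/- Let F be a field, n > 1, and A ∈ M_n(F). A has no nontrivial hyperinvariant subspace if and only if the minimal polynomial of A is irreducible over F. -/

import Mathlib

open Polynomial

private lemma aeval_comm' {F : Type*} [Field F] {n : ℕ}
    {A B : Matrix (Fin n) (Fin n) F} (hB : A * B = B * A) (q : F[X]) :
    (aeval A q) * B = B * (aeval A q) := by
  induction q using Polynomial.induction_on with
  | C a => rw [aeval_C]; exact Algebra.commutes a B
  | add p q hp hq => rw [map_add, add_mul, mul_add, hp, hq]
  | monomial m a hm =>
      have h1 : (C a : F[X]) * X ^ (m + 1) = (C a * X ^ m) * X := by ring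
      rw [h1, map_mul, aeval_X, mul_assoc, hB, ← mul_assoc, hm, mul_assoc]

private lemma exists_comm_matrix {F : Type*} [Field F] {n : ℕ}
    (A : Matrix (Fin n) (Fin n) F) (hp : Irreducible (minpoly F A))
    {v : Fin n → F} (hv : v ≠ 0) (w : Fin n → F) :
    ∃ B : Matrix (Fin n) (Fin n) F, A * B = B * A ∧ B.mulVec v = w := by
  classical
  haveI : Fact (Irreducible (minpoly F A)) := ⟨hp⟩
  have haev : (minpoly F A).eval₂ (algebraMap F (Matrix (Fin n) (Fin n) F)) A = 0 := by
    rw [← Polynomial.aeval_def]; exact minpoly.aeval F A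
  have hpA : aeval A (minpoly F A) = 0 := minpoly.aeval F A
  have hker : ∀ a ∈ Ideal.span {minpoly F A}, (Polynomial.aeval A).toRingHom a = (0 : Matrix (Fin n) (Fin n) F) := by
    intro a ha
    obtain ⟨c, hc⟩ := Ideal.mem_span_singleton'.mp ha
    show (Polynomial.aeval A) a = 0
    rw [← hc, map_mul, hpA, mul_zero]
  set K := AdjoinRoot (minpoly F A) with hK
  let ψ : K →+* Matrix (Fin n) (Fin n) F :=
    Ideal.Quotient.lift (Ideal.span {minpoly F A}) (Polynomial.aeval A).toRingHom hker
  letI instMod : Module K (Fin n → F) :=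
    { smul := fun k x => (ψ k).mulVec x
      one_smul := fun x => by
        show (ψ 1).mulVec x = x; rw [map_one, Matrix.one_mulVec]
      mul_smul := fun k l x => by
        show (ψ (k * l)).mulVec x = (ψ k).mulVec ((ψ l).mulVec x)
        rw [map_mul, Matrix.mulVec_mulVec]
      smul_add := fun k x y => by
        show (ψ k).mulVec (x + y) = (ψ k).mulVec x + (ψ k).mulVec y
        rw [Matrix.mulVec_add]
      smul_zero := fun k => by
        show (ψ k).mulVec 0 = 0; rw [Matrix.mulVec_zero]
      add_smul := fun k l x => by
        show (ψ (k + l)).mulVec x = (ψ k).mulVec x + (ψ l).mulVec x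
        rw [map_add, Matrix.add_mulVec]
      zero_smul := fun x => by
        show (ψ 0).mulVec x = 0; rw [map_zero, Matrix.zero_mulVec] }
  have hsmul : ∀ (k : K) (x : Fin n → F), k • x = (ψ k).mulVec x := fun _ _ => rfl
  have hroot : ψ (AdjoinRoot.root (minpoly F A)) = A := by
    show (Polynomial.aeval A) X = A
    rw [aeval_X]
  have halg : ∀ (a : F) (x : Fin n → F), (algebraMap F K a) • x = a • x := by
    intro a x
    rw [hsmul]
    have h1 : ψ (algebraMap F K a) = algebraMap F (Matrix (Fin n) (Fin n) F) a := by
      show (Polynomial.aeval A) (C a) = _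
      rw [aeval_C]
    rw [h1, Algebra.algebraMap_eq_smul_one, Matrix.smul_mulVec, Matrix.one_mulVec]
  haveI : NoZeroSMulDivisors K (Fin n → F) := ⟨fun {k x} h => by
    by_cases hk : k = 0
    · exact Or.inl hk
    · right
      have h2 := congrArg (fun y => k⁻¹ • y) h
      simpa [smul_smul, inv_mul_cancel₀ hk] using h2⟩
  have li : LinearIndepOn K id ({v} : Set (Fin n → F)) :=
    LinearIndepOn.singleton hv
  let b := Module.Basis.extend li
  have hvmem : v ∈ li.extend (Set.subset_univ _) :=
    li.subset_extend (Set.subset_univ _) (Set.mem_singleton v)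
  let g : ↥(li.extend (Set.subset_univ _)) → (Fin n → F) :=
    fun i => if (i : Fin n → F) = v then w else 0
  let f : (Fin n → F) →ₗ[K] (Fin n → F) := b.constr ℕ g
  have hfv : f v = w := by
    have hb : (b ⟨v, hvmem⟩ : Fin n → F) = v := Module.Basis.extend_apply_self li ⟨v, hvmem⟩
    calc f v = f (b ⟨v, hvmem⟩) := by rw [hb]
      _ = g ⟨v, hvmem⟩ := b.constr_basis ℕ g ⟨v, hvmem⟩
      _ = w := by simp [g]
  let g' : (Fin n → F) →ₗ[F] (Fin n → F) :=
    { toFun := f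
      map_add' := f.map_add
      map_smul' := fun a x => by
        show f (a • x) = a • f x
        rw [← halg a x, f.map_smul, halg] }
  let B := LinearMap.toMatrix' g'
  have hBapp : ∀ x, B.mulVec x = f x := by
    intro x
    calc B.mulVec x = Matrix.toLin' B x := (Matrix.toLin'_apply _ _).symm
      _ = g' x := by rw [Matrix.toLin'_toMatrix']
  have hA : ∀ y, A.mulVec y = (AdjoinRoot.root (minpoly F A)) • y := fun y => by
    rw [hsmul, hroot]
  refine ⟨B, ?_, by rw [hBapp v, hfv]⟩
  apply Matrix.toLin'.injective
  apply LinearMap.ext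
  intro x
  rw [Matrix.toLin'_apply, Matrix.toLin'_apply, ← Matrix.mulVec_mulVec,
    ← Matrix.mulVec_mulVec, hBapp, hBapp, hA, hA, f.map_smul]

/-- For `n > 1`, a matrix `A ∈ M_n(F)` has no nontrivial
hyperinvariant subspace iff its minimal polynomial is irreducible over `F`. -/
theorem stmt6 {F : Type*} [Field F] {n : ℕ} (hn : 1 < n)
    (A : Matrix (Fin n) (Fin n) F) :
    (∀ W : Submodule F (Fin n → F),
        (∀ B : Matrix (Fin n) (Fin n) F, A * B = B * A → ∀ x ∈ W, B.mulVec x ∈ W) →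
        W = ⊥ ∨ W = ⊤) ↔
      Irreducible (minpoly F A) := by
  have hint : IsIntegral F A := Algebra.IsIntegral.isIntegral A
  haveI : Nontrivial (Matrix (Fin n) (Fin n) F) := by
    have : Nonempty (Fin n) := ⟨⟨0, by omega⟩⟩
    infer_instance
  have hp0 : minpoly F A ≠ 0 := minpoly.ne_zero hint
  constructor
  · intro hW
    by_contra hirr
    rw [irreducible_iff] at hirr
    push_neg at hirr
    obtain ⟨q, r, hqr, hq, hr⟩ := hirr (minpoly.not_isUnit F A)
    have hq0 : q ≠ 0 := fun h => hp0 (by rw [hqr, h, zero_mul])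
    have hr0 : r ≠ 0 := fun h => hp0 (by rw [hqr, h, mul_zero])
    have hdeg : (minpoly F A).natDegree = q.natDegree + r.natDegree := by
      rw [hqr, Polynomial.natDegree_mul hq0 hr0]
    have hq1 : 0 < q.natDegree := by
      rcases Nat.eq_zero_or_pos q.natDegree with h | h
      · obtain ⟨a, ha⟩ := Polynomial.natDegree_eq_zero.mp h
        exact absurd (ha ▸ Polynomial.isUnit_C.mpr
          (isUnit_iff_ne_zero.mpr (fun h0 => hq0 (by rw [← ha, h0, map_zero])))) hq
      · exact h
    have hr1 : 0 < r.natDegree := by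
      rcases Nat.eq_zero_or_pos r.natDegree with h | h
      · obtain ⟨a, ha⟩ := Polynomial.natDegree_eq_zero.mp h
        exact absurd (ha ▸ Polynomial.isUnit_C.mpr
          (isUnit_iff_ne_zero.mpr (fun h0 => hr0 (by rw [← ha, h0, map_zero])))) hr
      · exact h
    have hpA : aeval A (minpoly F A) = 0 := minpoly.aeval F A
    set W : Submodule F (Fin n → F) := LinearMap.ker (Matrix.mulVecLin (aeval A q)) with hWdef
    have hmem : ∀ x, x ∈ W ↔ (aeval A q).mulVec x = 0 := by
      intro x; rw [hWdef, LinearMap.mem_ker, Matrix.mulVecLin_apply]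
    rcases hW W (by
      intro B hB x hx
      rw [hmem] at hx ⊢
      rw [Matrix.mulVec_mulVec, aeval_comm' hB, ← Matrix.mulVec_mulVec, hx,
        Matrix.mulVec_zero]) with hbot | htop
    · -- then r(A) = 0, contradiction with minimality
      have hrA : aeval A r = 0 := by
        have h1 : ∀ x, (aeval A r).mulVec x = 0 := by
          intro x
          have : (aeval A r).mulVec x ∈ W := by
            rw [hmem, Matrix.mulVec_mulVec, ← map_mul, ← hqr, hpA, Matrix.zero_mulVec]
          rw [hbot] at this
          simpa using this
        have h2 : Matrix.toLin' (aeval A r) = 0 :=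
          LinearMap.ext fun x => by rw [Matrix.toLin'_apply, h1]; rfl
        exact Matrix.toLin'.map_eq_zero_iff.mp h2
      have := Polynomial.natDegree_le_of_dvd (minpoly.dvd F A hrA) hr0
      omega
    · have hqA : aeval A q = 0 := by
        have h1 : ∀ x, (aeval A q).mulVec x = 0 := by
          intro x
          have : x ∈ W := htop ▸ Submodule.mem_top
          exact (hmem x).mp this
        have h2 : Matrix.toLin' (aeval A q) = 0 :=
          LinearMap.ext fun x => by rw [Matrix.toLin'_apply, h1]; rfl
        exact Matrix.toLin'.map_eq_zero_iff.mp h2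
      have := Polynomial.natDegree_le_of_dvd (minpoly.dvd F A hqA) hq0
      omega
  · intro hp W hWinv
    rcases eq_or_ne W ⊥ with h | h
    · exact Or.inl h
    · right
      obtain ⟨v, hvW, hv⟩ := Submodule.exists_mem_ne_zero_of_ne_bot h
      rw [Submodule.eq_top_iff']
      intro w
      obtain ⟨B, hB, hBv⟩ := exists_comm_matrix A hp hv w
      have := hWinv B hB v hvW
      rwa [hBv] at this
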